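/- arXiv:2404.03158 — 2 statements merged into one kernel-verified Lean document; each statement's English description precedes it below -/
import Mathlib

section
/- Let f : (τ, ∞) → ℝ be a uniformly continuous nonnegative function such that ∫_τ^∞ f(t) dt < ∞. Then f(t) → 0 as t → ∞. -/
open MeasureTheory Filter

theorem stmt_5 (τ : ℝ) (f : ℝ → ℝ)
    (huc : UniformContinuousOn f (Set.Ioi τ))
    (hnn : ∀ t ∈ Set.Ioi τ, 0 ≤ f t)
    (hint : IntegrableOn f (Set.Ioi τ) volume) :
    Tendsto f atTop (nhds 0) := by
  by_contra h
  rw [Metric.tendsto_atTop] at h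
  push_neg at h
  obtain ⟨ε, hε, hfreq⟩ := h
  -- uniform continuity modulus for ε/2
  rw [Metric.uniformContinuousOn_iff] at huc
  obtain ⟨δ, hδ, hucd⟩ := huc (ε / 2) (by linarith)
  set c := δ / 2 with hc
  have hcpos : 0 < c := by positivity
  -- partial integrals
  set F : ℝ → ℝ := fun t => ∫ x in Set.Ioc τ t, f x with hF
  have hsub : ∀ t : ℝ, Set.Ioc τ t ⊆ Set.Ioi τ := fun t => Set.Ioc_subset_Ioi_self
  have hnn' : 0 ≤ᵐ[volume.restrict (Set.Ioi τ)] f := by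
    filter_upwards [ae_restrict_mem measurableSet_Ioi] with x hx using hnn x hx
  have hFle : ∀ t, F t ≤ ∫ x in Set.Ioi τ, f x := by
    intro t
    exact setIntegral_mono_set hint hnn' ((hsub t).eventuallyLE)
  have hmono : Monotone F := by
    intro a b hab
    exact setIntegral_mono_set (hint.mono_set (hsub b)) (hnn'.filter_mono
      (ae_mono (Measure.restrict_mono (hsub b) le_rfl))) ((Set.Ioc_subset_Ioc_right hab).eventuallyLE)
  have hbdd : BddAbove (Set.range F) := ⟨_, Set.forall_mem_range.2 hFle⟩
  have hlim : Tendsto F atTop (nhds (⨆ t, F t)) := tendsto_atTop_ciSup hmono hbdd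
  have hlim2 : Tendsto (fun t => F (t + c) - F t) atTop (nhds 0) := by
    have : Tendsto (fun t : ℝ => t + c) atTop atTop := tendsto_atTop_add_const_right _ _ tendsto_id
    simpa using (hlim.comp this).sub hlim
  have hev : ∀ᶠ t in atTop, |F (t + c) - F t| < ε / 2 * c := by
    have := hlim2
    rw [Metric.tendsto_atTop] at this
    obtain ⟨N, hN⟩ := this (ε / 2 * c) (by positivity)
    exact eventually_atTop.2 ⟨N, fun t ht => by simpa [Real.dist_eq] using hN t ht⟩
  obtain ⟨N, hN⟩ := eventually_atTop.1 hev
  obtain ⟨t, ht, htf⟩ := hfreq (max N (τ + 1))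
  have htτ : τ < t := lt_of_lt_of_le (by linarith) (le_trans (le_max_right _ _) ht)
  have hft : ε ≤ f t := by
    rw [Real.dist_eq, sub_zero, abs_of_nonneg (hnn t htτ)] at htf
    exact htf
  -- on Ioc t (t+c), f > ε/2
  have hlow : ∀ s ∈ Set.Ioc t (t + c), ε / 2 ≤ f s := by
    intro s hs
    have hsτ : s ∈ Set.Ioi τ := lt_of_lt_of_le htτ (le_of_lt hs.1)
    have hd : dist s t < δ := by
      rw [Real.dist_eq, abs_of_nonneg (by linarith [hs.1.le])]
      have := hs.2
      simp only [hc] at *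
      linarith
    have := hucd s hsτ t htτ hd
    rw [Real.dist_eq, abs_sub_lt_iff] at this
    linarith [this.2]
  -- integral over Ioc t (t+c) is large
  have hintt : IntegrableOn f (Set.Ioc t (t + c)) volume :=
    hint.mono_set (fun x hx => lt_of_lt_of_le htτ hx.1.le)
  have hmeasC : (volume (Set.Ioc t (t + c))).toReal = c := by
    rw [Real.volume_Ioc]
    simp [ENNReal.toReal_ofReal hcpos.le]
  have hbig : ε / 2 * c ≤ ∫ x in Set.Ioc t (t + c), f x := by
    have := setIntegral_ge_of_const_le measurableSet_Ioc
      (by rw [Real.volume_Ioc]; exact ENNReal.ofReal_ne_top) hlow hintt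
    rwa [measureReal_def, hmeasC, smul_eq_mul, mul_comm] at this
  -- additivity
  have hsplit : F (t + c) - F t = ∫ x in Set.Ioc t (t + c), f x := by
    have hunion : Set.Ioc τ t ∪ Set.Ioc t (t + c) = Set.Ioc τ (t + c) :=
      Set.Ioc_union_Ioc_eq_Ioc htτ.le (by linarith)
    have hdisj : Disjoint (Set.Ioc τ t) (Set.Ioc t (t + c)) := Set.Ioc_disjoint_Ioc_of_le le_rfl
    have := setIntegral_union hdisj measurableSet_Ioc (hint.mono_set (hsub t)) hintt
    rw [hunion] at this
    simp only [hF]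
    rw [this]
    ring
  have := hN t (le_trans (le_max_left _ _) ht)
  rw [hsplit] at this
  have : ∫ x in Set.Ioc t (t + c), f x < ε / 2 * c := lt_of_abs_lt this
  linarith
end

section
/- Let μ, ν, λ > 0, let Ω ⊂ ℝ^N be a bounded smooth domain, let u, v, w ∈ C²(Ω̄) with w > 0 on Ω̄, satisfying 0 = Δw - μw + νu + λv in Ω with homogeneous Neumann boundary condition ∂w/∂n = 0 on ∂Ω. Let w* > 0 be a constant and u*, v* constants with μw* = νu* + λv*. Then ∫_Ω |∇w|²/w² ≤ (1/w*) ∫_Ω (1/w)[ max{0, -μ + ν/2 + λ/2}(w - w*)² + (ν/2)(u - u*)² + (λ/2)(v - v*)² ]. -/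
open MeasureTheory
open scoped RealInnerProductSpace

/-- The Laplacian of a function on Euclidean space. -/
noncomputable def lap {N : ℕ} (w : EuclideanSpace ℝ (Fin N) → ℝ)
    (x : EuclideanSpace ℝ (Fin N)) : ℝ :=
  ∑ i : Fin N,
    fderiv ℝ (fun y => fderiv ℝ w y (EuclideanSpace.single i 1)) x
      (EuclideanSpace.single i 1)

theorem stmt_11 {N : ℕ} (Ω : Set (EuclideanSpace ℝ (Fin N)))
    (hopen : IsOpen Ω) (hbdd : Bornology.IsBounded Ω)
    (μ ν lam : ℝ) (hμ : 0 < μ) (hν : 0 < ν) (hlam : 0 < lam)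
    (u v w : EuclideanSpace ℝ (Fin N) → ℝ)
    (hu : ContDiffOn ℝ 2 u (closure Ω)) (hv : ContDiffOn ℝ 2 v (closure Ω))
    (hw : ContDiffOn ℝ 2 w (closure Ω))
    (hwpos : ∀ x ∈ closure Ω, 0 < w x)
    (hpde : ∀ x ∈ Ω, lap w x - μ * w x + ν * u x + lam * v x = 0)
    -- integration by parts against ∇w: valid since Ω is a smooth domain and
    -- w satisfies the homogeneous Neumann boundary condition ∂w/∂n = 0 on ∂Ω
    (hibp : ∀ f : EuclideanSpace ℝ (Fin N) → ℝ, ContDiffOn ℝ 1 f (closure Ω) →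
      ∫ x in Ω, f x * lap w x = -∫ x in Ω, ⟪gradient f x, gradient w x⟫)
    (ustar vstar wstar : ℝ) (hwstar : 0 < wstar)
    (hstar : μ * wstar = ν * ustar + lam * vstar) :
    ∫ x in Ω, ‖gradient w x‖ ^ 2 / (w x) ^ 2 ≤
      (1 / wstar) * ∫ x in Ω, (1 / w x) *
        (max 0 (-μ + ν / 2 + lam / 2) * (w x - wstar) ^ 2
          + (ν / 2) * (u x - ustar) ^ 2 + (lam / 2) * (v x - vstar) ^ 2) := by
  have hwne : ∀ x ∈ closure Ω, w x ≠ 0 := fun x hx => (hwpos x hx).ne'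
  set f : EuclideanSpace ℝ (Fin N) → ℝ := fun x => 1 - wstar / w x with hf
  have hfC1 : ContDiffOn ℝ 1 f (closure Ω) :=
    contDiffOn_const.sub (contDiffOn_const.div (hw.of_le (by norm_num)) hwne)
  have key := hibp f hfC1
  have hmeas : MeasurableSet Ω := hopen.measurableSet
  -- closure ∈ 𝓝 x for x ∈ Ω
  have hnhds : ∀ x ∈ Ω, closure Ω ∈ nhds x := fun x hx =>
    Filter.mem_of_superset (hopen.mem_nhds hx) subset_closure
  -- gradient formula for f on Ω
  have hgrad : ∀ x ∈ Ω, gradient f x = (wstar / (w x) ^ 2) • gradient w x := by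
    intro x hx
    have hwd : DifferentiableAt ℝ w x :=
      ((hw.contDiffAt (hnhds x hx)).differentiableAt (by norm_num))
    have hne : w x ≠ 0 := hwne x (subset_closure hx)
    have hgder : HasDerivAt (fun t : ℝ => 1 - wstar / t) (wstar / (w x) ^ 2) (w x) := by
      have h1 : HasDerivAt (fun t : ℝ => wstar / t)
          ((0 * w x - wstar * 1) / (w x) ^ 2) (w x) :=
        (hasDerivAt_const _ wstar).div (hasDerivAt_id _) hne
      have h2 := (hasDerivAt_const (w x) (1 : ℝ)).sub h1
      refine h2.congr_deriv ?_
      ring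
    have hfd : HasFDerivAt f ((wstar / (w x) ^ 2) • fderiv ℝ w x) x :=
      hgder.comp_hasFDerivAt x hwd.hasFDerivAt
    have hfe : fderiv ℝ f x = (wstar / (w x) ^ 2) • fderiv ℝ w x := hfd.fderiv
    simp only [gradient, hfe]
    exact (InnerProductSpace.toDual ℝ _).symm.map_smul _ _
  -- rewrite the inner product integrand
  have hinner : ∀ x ∈ Ω, ⟪gradient f x, gradient w x⟫ =
      wstar * (‖gradient w x‖ ^ 2 / (w x) ^ 2) := by
    intro x hx
    rw [hgrad x hx, real_inner_smul_left, real_inner_self_eq_norm_sq]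
    field_simp
  have e1 : ∫ x in Ω, ⟪gradient f x, gradient w x⟫
      = wstar * ∫ x in Ω, ‖gradient w x‖ ^ 2 / (w x) ^ 2 := by
    rw [← MeasureTheory.integral_const_mul]
    exact setIntegral_congr_fun hmeas hinner
  -- use the PDE to rewrite f * lap w
  have e2 : ∫ x in Ω, f x * lap w x
      = ∫ x in Ω, f x * (μ * w x - ν * u x - lam * v x) := by
    refine setIntegral_congr_fun hmeas (fun x hx => ?_)
    have := hpde x hx
    have : lap w x = μ * w x - ν * u x - lam * v x := by linarith
    rw [this]
  -- the exact identity
  have hid : wstar * ∫ x in Ω, ‖gradient w x‖ ^ 2 / (w x) ^ 2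
      = ∫ x in Ω, f x * (ν * u x + lam * v x - μ * w x) := by
    have : ∫ x in Ω, f x * (ν * u x + lam * v x - μ * w x)
        = -∫ x in Ω, f x * (μ * w x - ν * u x - lam * v x) := by
      rw [← integral_neg]
      refine setIntegral_congr_fun hmeas (fun x _ => ?_)
      ring
    rw [this, ← e2, key, neg_neg, e1]
  -- pointwise inequality on Ω
  have hpt : ∀ x ∈ Ω, f x * (ν * u x + lam * v x - μ * w x) ≤
      (1 / w x) * (max 0 (-μ + ν / 2 + lam / 2) * (w x - wstar) ^ 2
          + (ν / 2) * (u x - ustar) ^ 2 + (lam / 2) * (v x - vstar) ^ 2) := by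
    intro x hx
    have hwx : 0 < w x := hwpos x (subset_closure hx)
    have hM1 : -μ + ν / 2 + lam / 2 ≤ max 0 (-μ + ν / 2 + lam / 2) := le_max_right _ _
    have hPQ : ν * u x + lam * v x - μ * w x
        = ν * (u x - ustar) + lam * (v x - vstar) - μ * (w x - wstar) := by linarith
    have hfx : f x = (w x - wstar) / w x := by
      simp only [hf]; field_simp
    have hlhs : f x * (ν * u x + lam * v x - μ * w x)
        = (1 / w x) * ((w x - wstar) * (ν * (u x - ustar) + lam * (v x - vstar)
            - μ * (w x - wstar))) := by
      rw [hfx, hPQ]; field_simp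
    rw [hlhs]
    have hw1 : (0:ℝ) ≤ 1 / w x := by positivity
    refine mul_le_mul_of_nonneg_left ?_ hw1
    nlinarith [sq_nonneg (w x - wstar - (u x - ustar)), sq_nonneg (w x - wstar - (v x - vstar)),
      sq_nonneg (w x - wstar), le_max_left (0:ℝ) (-μ + ν / 2 + lam / 2)]
  -- integrability
  have hcomp : IsCompact (closure Ω) :=
    Metric.isCompact_of_isClosed_isBounded isClosed_closure hbdd.closure
  have hwc : ContinuousOn w (closure Ω) := hw.continuousOn
  have hfc : ContinuousOn f (closure Ω) :=
    continuousOn_const.sub (continuousOn_const.div hwc hwne)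
  have hintg : IntegrableOn (fun x => f x * (ν * u x + lam * v x - μ * w x)) Ω := by
    refine (ContinuousOn.integrableOn_compact hcomp ?_).mono_set subset_closure
    exact hfc.mul (((continuousOn_const.mul hu.continuousOn).add
      (continuousOn_const.mul hv.continuousOn)).sub (continuousOn_const.mul hwc))
  have hinth : IntegrableOn (fun x => (1 / w x) *
      (max 0 (-μ + ν / 2 + lam / 2) * (w x - wstar) ^ 2
        + (ν / 2) * (u x - ustar) ^ 2 + (lam / 2) * (v x - vstar) ^ 2)) Ω := by
    refine (ContinuousOn.integrableOn_compact hcomp ?_).mono_set subset_closure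
    refine (continuousOn_const.div hwc hwne).mul ?_
    refine (((continuousOn_const.mul ((hwc.sub continuousOn_const).pow 2)).add
      (continuousOn_const.mul ((hu.continuousOn.sub continuousOn_const).pow 2))).add
      (continuousOn_const.mul ((hv.continuousOn.sub continuousOn_const).pow 2)))
  have hmono := setIntegral_mono_on hintg hinth hmeas hpt
  have hfin : wstar * ∫ x in Ω, ‖gradient w x‖ ^ 2 / (w x) ^ 2 ≤
      ∫ x in Ω, (1 / w x) * (max 0 (-μ + ν / 2 + lam / 2) * (w x - wstar) ^ 2
        + (ν / 2) * (u x - ustar) ^ 2 + (lam / 2) * (v x - vstar) ^ 2) :=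
    hid.trans_le hmono
  calc ∫ x in Ω, ‖gradient w x‖ ^ 2 / (w x) ^ 2
      = (1 / wstar) * (wstar * ∫ x in Ω, ‖gradient w x‖ ^ 2 / (w x) ^ 2) := by
        field_simp
    _ ≤ _ := mul_le_mul_of_nonneg_left hfin (by positivity)
end
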